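/- Let x ∈ P, let v be a minimizer of z ↦ ∇f(x)·z over P and v′ a minimizer of z ↦ ∇f(x)·z over P′, and suppose λ ∈ ℝ^m is a common dual solution for v in P and for v′ in P′ (λ ≥ 0, ∇f(x) = −λᵀA, ∇f(x)·v = −λ·b, ∇f(x)·v′ = −λ·b′). Then f(x) − ∇f(x)·(x − v) + λ·(b − b′) ≤ min_{z ∈ P′} f(z). -/

import Mathlib

open scoped RealInnerProductSpace BigOperators


theorem grad_ineq {E : Type*} [NormedAddCommGroup E] [InnerProductSpace ℝ E] [CompleteSpace E]
    {D : Set E} (hDconv : Convex ℝ D) {f : E → ℝ} {G : E}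
    {x y : E} (hx : x ∈ D) (hy : y ∈ D)
    (hconv : ConvexOn ℝ D f) (hg : HasGradientAt f G x) :
    f x + ⟪G, y - x⟫ ≤ f y := by
  have hline : HasDerivAt (fun t : ℝ => x + t • (y - x)) (y - x) 0 := by
    simpa using ((hasDerivAt_id (0:ℝ)).smul_const (y - x)).const_add x
  have hφ : HasDerivAt (fun t : ℝ => f (x + t • (y - x))) ⟪G, y - x⟫ 0 := by
    have hg' : HasFDerivAt f (InnerProductSpace.toDual ℝ E G) (x + (0:ℝ) • (y - x)) := by
      simpa using hg.hasFDerivAt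
    have := hg'.comp_hasDerivAt 0 hline
    simpa [Function.comp_def] using this
  have hslope : Filter.Tendsto (slope (fun t : ℝ => f (x + t • (y - x))) 0)
      (nhdsWithin 0 {(0:ℝ)}ᶜ) (nhds ⟪G, y - x⟫) :=
    hasDerivAt_iff_tendsto_slope.mp hφ
  have hsub : nhdsWithin (0:ℝ) (Set.Ioi 0) ≤ nhdsWithin 0 {(0:ℝ)}ᶜ :=
    nhdsWithin_mono _ (fun t ht => ne_of_gt ht)
  have key : ⟪G, y - x⟫ ≤ f y - f x := by
    refine le_of_tendsto (hslope.mono_left hsub) ?_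
    filter_upwards [Ioo_mem_nhdsGT_of_mem (by norm_num : (0:ℝ) ∈ Set.Ico 0 1)]
      with t ht
    have ht0 : 0 < t := ht.1
    have ht1 : t < 1 := ht.2
    have hcv : f (x + t • (y - x)) ≤ (1 - t) * f x + t * f y := by
      have := hconv.2 hx hy (by linarith : (0:ℝ) ≤ 1 - t) (le_of_lt ht0)
        (by ring : (1 - t) + t = 1)
      simpa [smul_eq_mul, smul_smul, sub_smul, smul_sub, one_smul] using
        this.trans_eq' (by congr 1; module)
    have : slope (fun t : ℝ => f (x + t • (y - x))) 0 t
        = (f (x + t • (y - x)) - f x) / t := by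
      simp [slope_def_field, div_eq_inv_mul]
    rw [this, div_le_iff₀ ht0]
    nlinarith
  linarith


/-- With `v`, `v′` Frank–Wolfe vertices at `x` over `P` resp. `P′`
and `λ` a common dual solution for `v` in `P` and `v′` in `P′`,
`f(x) − ∇f(x)·(x − v) + λ·(b − b′) ≤ min_{z ∈ P′} f(z)`. -/
theorem stmt_5 {n m : ℕ}
    (A : Matrix (Fin m) (Fin n) ℝ) (b b' : Fin m → ℝ)
    (P P' : Set (EuclideanSpace ℝ (Fin n)))
    (hP : P = {z : EuclideanSpace ℝ (Fin n) | ∀ i, (∑ j, A i j * z j) ≤ b i})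
    (hP' : P' = {z : EuclideanSpace ℝ (Fin n) | ∀ i, (∑ j, A i j * z j) ≤ b' i})
    (hPne : P.Nonempty) (hPcpt : IsCompact P)
    (hP'ne : P'.Nonempty) (hP'cpt : IsCompact P')
    (D : Set (EuclideanSpace ℝ (Fin n)))
    (hDopen : IsOpen D) (hDconv : Convex ℝ D) (hPD : P ⊆ D) (hP'D : P' ⊆ D)
    (f : EuclideanSpace ℝ (Fin n) → ℝ)
    (g : EuclideanSpace ℝ (Fin n) → EuclideanSpace ℝ (Fin n))
    (hconv : ConvexOn ℝ D f)
    (hgrad : ∀ y ∈ D, HasGradientAt f (g y) y)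
    (x : EuclideanSpace ℝ (Fin n)) (hx : x ∈ P)
    (v : EuclideanSpace ℝ (Fin n)) (hv : v ∈ P)
    (hvmin : ∀ z ∈ P, ⟪g x, v⟫ ≤ ⟪g x, z⟫)
    (v' : EuclideanSpace ℝ (Fin n)) (hv' : v' ∈ P')
    (hv'min : ∀ z ∈ P', ⟪g x, v'⟫ ≤ ⟪g x, z⟫)
    (lam : Fin m → ℝ) (hlam : ∀ i, 0 ≤ lam i)
    (hdual : ∀ j, g x j = -(∑ i, lam i * A i j))
    (hcompl : ⟪g x, v⟫ = -(∑ i, lam i * b i))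
    (hcompl' : ⟪g x, v'⟫ = -(∑ i, lam i * b' i)) :
    ∀ z' ∈ P', f x - ⟪g x, x - v⟫ + (∑ i, lam i * (b i - b' i)) ≤ f z' := by
  intro z' hz'
  have hxD := hPD hx
  have hz'D := hP'D hz'
  have hgi := grad_ineq hDconv hxD hz'D hconv (hgrad x hxD)
  have hz'cons : ∀ i, (∑ j, A i j * z' j) ≤ b' i := by rw [hP'] at hz'; exact hz'
  have hinner : ⟪g x, z'⟫ = ∑ j, g x j * z' j := by
    simp [PiLp.inner_apply, RCLike.inner_apply, mul_comm]
  have hrw : ⟪g x, z'⟫ = -∑ i, lam i * (∑ j, A i j * z' j) := by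
    rw [hinner]
    simp_rw [hdual, neg_mul, Finset.sum_neg_distrib, Finset.sum_mul, Finset.mul_sum]
    rw [Finset.sum_comm]
    ring_nf
  have key : -(∑ i, lam i * b' i) ≤ ⟪g x, z'⟫ := by
    rw [hrw]
    apply neg_le_neg
    exact Finset.sum_le_sum fun i _ => mul_le_mul_of_nonneg_left (hz'cons i) (hlam i)
  have e1 : ⟪g x, z' - x⟫ = ⟪g x, z'⟫ - ⟪g x, x⟫ := inner_sub_right _ _ _
  have e2 : ⟪g x, x - v⟫ = ⟪g x, x⟫ - ⟪g x, v⟫ := inner_sub_right _ _ _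
  have e3 : (∑ i, lam i * (b i - b' i)) = (∑ i, lam i * b i) - ∑ i, lam i * b' i := by
    simp [mul_sub, Finset.sum_sub_distrib]
  linarith
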